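/- For all positive integers a, b, n with a > b, the factorial ratio (2an)! (bn)! / ((an)! (2bn)! ((a-b)n)!) is an integer. -/

import Mathlib

open Nat Finset

lemma key_div_ineq (q A B : ℕ) (hq : 0 < q) (h : B ≤ A) :
    A / q + 2 * B / q + (A - B) / q ≤ 2 * A / q + B / q := by
  obtain ⟨t, v, hvlt, rfl⟩ : ∃ t v, v < q ∧ B = q * t + v :=
    ⟨B / q, B % q, Nat.mod_lt _ hq, (Nat.div_add_mod B q).symm⟩
  obtain ⟨s, u, hult, rfl⟩ : ∃ s u, u < q ∧ A = q * s + u :=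
    ⟨A / q, A % q, Nat.mod_lt _ hq, (Nat.div_add_mod A q).symm⟩
  have hts : t ≤ s := by
    by_contra hle
    push_neg at hle
    have h1 : q * (s + 1) ≤ q * t := Nat.mul_le_mul_left q hle
    have h2 : q * (s + 1) = q * s + q := by ring
    omega
  have hdivB : (q * t + v) / q = t := by
    rw [Nat.mul_add_div hq, Nat.div_eq_of_lt hvlt, add_zero]
  have hdivA : (q * s + u) / q = s := by
    rw [Nat.mul_add_div hq, Nat.div_eq_of_lt hult, add_zero]
  have h2A : 2 * (q * s + u) / q = 2 * s + 2 * u / q := by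
    have e : 2 * (q * s + u) = q * (2 * s) + 2 * u := by ring
    rw [e, Nat.mul_add_div hq]
  have h2B : 2 * (q * t + v) / q = 2 * t + 2 * v / q := by
    have e : 2 * (q * t + v) = q * (2 * t) + 2 * v := by ring
    rw [e, Nat.mul_add_div hq]
  rw [hdivA, hdivB, h2A, h2B]
  rcases le_or_gt v u with hc | hc
  · -- v ≤ u : s = t + d
    obtain ⟨d, rfl⟩ : ∃ d, s = t + d := ⟨s - t, by omega⟩
    have hexp : q * (t + d) = q * t + q * d := by ring
    have hsub : q * (t + d) + u - (q * t + v) = q * d + (u - v) := by omega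
    have hdiv : (q * (t + d) + u - (q * t + v)) / q = d := by
      rw [hsub, Nat.mul_add_div hq, Nat.div_eq_of_lt (by omega), add_zero]
    have hdd : 2 * v / q ≤ 2 * u / q := Nat.div_le_div_right (by omega)
    rw [hdiv]
    clear hdivA hdivB h2A h2B hsub hdiv hexp h
    generalize 2 * u / q = x at hdd ⊢
    generalize 2 * v / q = y at hdd ⊢
    omega
  · -- u < v : then t < s
    have hst : t < s := by
      by_contra hle
      push_neg at hle
      have h1 : q * s ≤ q * t := Nat.mul_le_mul_left q hle
      omega
    obtain ⟨d, rfl⟩ : ∃ d, s = t + 1 + d := ⟨s - t - 1, by omega⟩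
    have hexp : q * (t + 1 + d) = q * t + q + q * d := by ring
    have hsub : q * (t + 1 + d) + u - (q * t + v) = q * d + (q - (v - u)) := by omega
    have hdiv : (q * (t + 1 + d) + u - (q * t + v)) / q = d := by
      rw [hsub, Nat.mul_add_div hq, Nat.div_eq_of_lt (by omega), add_zero]
    have hdd : 2 * v / q < 2 := (Nat.div_lt_iff_lt_mul hq).mpr (by omega)
    rw [hdiv]
    clear hdivA hdivB h2A h2B hsub hdiv hexp h
    generalize 2 * u / q = x at hdd ⊢
    generalize 2 * v / q = y at hdd ⊢
    omega

theorem stmt_1 (a b n : ℕ) (hb : 0 < b) (hab : b < a) (hn : 0 < n) :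
    (Nat.factorial (a * n) * Nat.factorial (2 * b * n) * Nat.factorial ((a - b) * n)) ∣
      (Nat.factorial (2 * a * n) * Nat.factorial (b * n)) := by
  set A := a * n with hA
  set B := b * n with hB
  have hBA : B ≤ A := Nat.mul_le_mul_right n hab.le
  have h2A : 2 * a * n = 2 * A := by rw [hA]; ring
  have h2B : 2 * b * n = 2 * B := by rw [hB]; ring
  have hABn : (a - b) * n = A - B := by rw [hA, hB, Nat.sub_mul]
  rw [h2A, h2B, hABn]
  rw [← Nat.factorization_le_iff_dvd
      (by positivity) (by positivity)]
  intro p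
  rcases Nat.eq_zero_or_pos p with rfl | hp0
  · simp
  by_cases hp : p.Prime
  · haveI : Fact p.Prime := ⟨hp⟩
    have hb1 : ∀ m : ℕ, m ≤ 2 * A → Nat.log p m < 2 * A + 1 := fun m hm =>
      lt_of_le_of_lt (Nat.log_le_self p m) (by omega)
    have e1 : (Nat.factorial A).factorization p = ∑ i ∈ Ico 1 (2*A+1), A / p ^ i := by
      rw [Nat.factorization_def _ hp, padicValNat_factorial (hb1 A (by omega))]
    have e2 : (Nat.factorial (2*B)).factorization p = ∑ i ∈ Ico 1 (2*A+1), 2*B / p ^ i := by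
      rw [Nat.factorization_def _ hp, padicValNat_factorial (hb1 (2*B) (by omega))]
    have e3 : (Nat.factorial (A-B)).factorization p = ∑ i ∈ Ico 1 (2*A+1), (A-B) / p ^ i := by
      rw [Nat.factorization_def _ hp, padicValNat_factorial (hb1 (A-B) (by omega))]
    have e4 : (Nat.factorial (2*A)).factorization p = ∑ i ∈ Ico 1 (2*A+1), 2*A / p ^ i := by
      rw [Nat.factorization_def _ hp, padicValNat_factorial (hb1 (2*A) (by omega))]
    have e5 : (Nat.factorial B).factorization p = ∑ i ∈ Ico 1 (2*A+1), B / p ^ i := by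
      rw [Nat.factorization_def _ hp, padicValNat_factorial (hb1 B (by omega))]
    simp only [Nat.factorization_mul (Nat.factorial_ne_zero _) (Nat.factorial_ne_zero _),
      Nat.factorization_mul (mul_ne_zero (Nat.factorial_ne_zero _) (Nat.factorial_ne_zero _))
        (Nat.factorial_ne_zero _), Finsupp.add_apply]
    rw [e1, e2, e3, e4, e5, ← Finset.sum_add_distrib, ← Finset.sum_add_distrib,
      ← Finset.sum_add_distrib]
    exact Finset.sum_le_sum fun i _ =>
      key_div_ineq (p ^ i) A B (Nat.pow_pos hp0) hBA
  · simp [Nat.factorization_eq_zero_of_not_prime _ hp]
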